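/- Consider the PnP model: R° ∈ SO(3), t° ∈ ℝ³, deterministic points (pᵢ)_{i∈ℕ} ⊂ ℝ³ with ‖pᵢ‖ ≤ K and depths dᵢ = e₃ᵀ(R°pᵢ + t°) ≥ δ for constants K, δ > 0, and observations qᵢ' = W E (R°pᵢ + t°)/dᵢ + εᵢ, where the scalar noise coordinates ε_{i,j} (i ∈ ℕ, j ∈ {1,2}) are mutually independent identically distributed real random variables with mean 0, variance σ², and finite fourth moment. Then (1/n)(Aₙᵀ Aₙ − Bₙᵀ Bₙ) − σ² (1/n) Gₙᵀ Gₙ converges in probability to the zero 11×11 matrix as n → ∞. -/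

import Mathlib

open MeasureTheory ProbabilityTheory Matrix Finset

/-- `W = diag(f_x, f_y)`. -/
def Wmat (fx fy : ℝ) : Matrix (Fin 2) (Fin 2) ℝ := Matrix.diagonal ![fx, fy]

/-- `E = [e₁ e₂]ᵀ ∈ ℝ^{2×3}`, whose rows are the first two standard basis vectors of `ℝ³`. -/
def Emat : Matrix (Fin 2) (Fin 3) ℝ := Matrix.of fun i j => if (i : ℕ) = (j : ℕ) then 1 else 0

/-- Row `2i−1` of `A`: `[−u(pᵢ−p̄)ᵀ, f_x pᵢᵀ, f_x, 0_{1×4}]`. -/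
def rowU (fx u : ℝ) (p pbar : Fin 3 → ℝ) : Fin 11 → ℝ := fun k =>
  if h : (k : ℕ) < 3 then -u * (p ⟨k, h⟩ - pbar ⟨k, h⟩)
  else if h2 : (k : ℕ) < 6 then fx * p ⟨(k : ℕ) - 3, by omega⟩
  else if (k : ℕ) = 6 then fx else 0

/-- Row `2i` of `A`: `[−v(pᵢ−p̄)ᵀ, 0_{1×4}, f_y pᵢᵀ, f_y]`. -/
def rowV (fy v : ℝ) (p pbar : Fin 3 → ℝ) : Fin 11 → ℝ := fun k =>
  if h : (k : ℕ) < 3 then -v * (p ⟨k, h⟩ - pbar ⟨k, h⟩)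
  else if (k : ℕ) < 7 then 0
  else if h2 : (k : ℕ) < 10 then fy * p ⟨(k : ℕ) - 7, by omega⟩ else fy

/-- The pair of rows of `A` (or `B`) associated with a point `p` and observation `q = (u,v)ᵀ`. -/
def Arow (fx fy : ℝ) (q : Fin 2 → ℝ) (p pbar : Fin 3 → ℝ) : Fin 2 → Fin 11 → ℝ :=
  ![rowU fx (q 0) p pbar, rowV fy (q 1) p pbar]

/-- The row `[−(pᵢ−p̄)ᵀ, 0_{1×8}]` of `G` (repeated twice per point). -/
def Grow (p pbar : Fin 3 → ℝ) : Fin 11 → ℝ := fun k =>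
  if h : (k : ℕ) < 3 then -(p ⟨k, h⟩ - pbar ⟨k, h⟩) else 0

/-- The Frobenius norm of a real `11×11` matrix. -/
noncomputable def frobNorm11 (M : Matrix (Fin 11) (Fin 11) ℝ) : ℝ :=
  Real.sqrt (∑ i, ∑ j, (M i j) ^ 2)

/-! ### Auxiliary deterministic lemmas -/

lemma aux_rowU_add (fx u e : ℝ) (p pbar : Fin 3 → ℝ) (k : Fin 11) :
    rowU fx (u + e) p pbar k = rowU fx u p pbar k + e * Grow p pbar k := by
  unfold rowU Grow; split_ifs <;> ring

lemma aux_rowV_add (fy v e : ℝ) (p pbar : Fin 3 → ℝ) (k : Fin 11) :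
    rowV fy (v + e) p pbar k = rowV fy v p pbar k + e * Grow p pbar k := by
  unfold rowV Grow; split_ifs <;> ring

lemma aux_Arow_add (fx fy : ℝ) (qv ev : Fin 2 → ℝ) (p pbar : Fin 3 → ℝ) (j : Fin 2) (k : Fin 11) :
    Arow fx fy (qv + ev) p pbar j k = Arow fx fy qv p pbar j k + ev j * Grow p pbar k := by
  fin_cases j
  · simpa [Arow] using aux_rowU_add fx (qv 0) (ev 0) p pbar k
  · simpa [Arow] using aux_rowV_add fy (qv 1) (ev 1) p pbar k

lemma aux_Grow_bound {K : ℝ} {p pbar : Fin 3 → ℝ} (hp : ∀ m, |p m| ≤ K) (hpb : ∀ m, |pbar m| ≤ K)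
    (k : Fin 11) : |Grow p pbar k| ≤ 2 * K := by
  have hK : 0 ≤ K := le_trans (abs_nonneg _) (hp 0)
  unfold Grow; split_ifs with h
  · have h1 := hp ⟨k, h⟩; have h2 := hpb ⟨k, h⟩
    rw [abs_neg]
    calc |p ⟨k, h⟩ - pbar ⟨k, h⟩| ≤ |p ⟨k, h⟩| + |pbar ⟨k, h⟩| := abs_sub _ _
      _ ≤ 2 * K := by linarith
  · simpa using by linarith

lemma aux_rowU_bound {fx fm u Q K : ℝ} {p pbar : Fin 3 → ℝ} (hfx : 0 ≤ fx) (hfm : fx ≤ fm)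
    (hQ : 0 ≤ Q) (hK : 0 ≤ K) (hu : |u| ≤ Q) (hp : ∀ m, |p m| ≤ K) (hpb : ∀ m, |pbar m| ≤ K)
    (k : Fin 11) : |rowU fx u p pbar k| ≤ Q * (2 * K) + fm * K + fm := by
  have hfm0 : 0 ≤ fm := le_trans hfx hfm
  unfold rowU; split_ifs with h1 h2 h3
  · have : |(-u) * (p ⟨k, h1⟩ - pbar ⟨k, h1⟩)| ≤ Q * (2 * K) := by
      rw [abs_mul, abs_neg]
      have h2 := hp ⟨k, h1⟩; have h3 := hpb ⟨k, h1⟩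
      have hb : |p ⟨k, h1⟩ - pbar ⟨k, h1⟩| ≤ 2 * K := by
        calc |p ⟨k, h1⟩ - pbar ⟨k, h1⟩| ≤ |p _| + |pbar _| := abs_sub _ _
          _ ≤ 2 * K := by linarith
      exact mul_le_mul hu hb (abs_nonneg _) hQ
    nlinarith [this]
  · have : |fx * p ⟨(k:ℕ)-3, by omega⟩| ≤ fm * K := by
      rw [abs_mul, abs_of_nonneg hfx]
      exact mul_le_mul hfm (hp _) (abs_nonneg _) hfm0
    nlinarith [this]
  · rw [abs_of_nonneg hfx]; nlinarith
  · simpa using by nlinarith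

lemma aux_rowV_bound {fy fm v Q K : ℝ} {p pbar : Fin 3 → ℝ} (hfy : 0 ≤ fy) (hfm : fy ≤ fm)
    (hQ : 0 ≤ Q) (hK : 0 ≤ K) (hv : |v| ≤ Q) (hp : ∀ m, |p m| ≤ K) (hpb : ∀ m, |pbar m| ≤ K)
    (k : Fin 11) : |rowV fy v p pbar k| ≤ Q * (2 * K) + fm * K + fm := by
  have hfm0' : 0 ≤ fm := le_trans hfy hfm
  unfold rowV; split_ifs with h1 h2 h3
  · rw [abs_mul, abs_neg]
    have hb : |p ⟨k, h1⟩ - pbar ⟨k, h1⟩| ≤ 2 * K := by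
      calc |p ⟨k, h1⟩ - pbar ⟨k, h1⟩| ≤ |p _| + |pbar _| := abs_sub _ _
        _ ≤ 2 * K := by linarith [hp ⟨k, h1⟩, hpb ⟨k, h1⟩]
    nlinarith [mul_le_mul hv hb (abs_nonneg _) hQ]
  · simpa using by nlinarith
  · rw [abs_mul, abs_of_nonneg hfy]
    nlinarith [mul_le_mul hfm (hp ⟨(k:ℕ)-7, by omega⟩) (abs_nonneg _) hfm0']
  · rw [abs_of_nonneg hfy]; nlinarith

lemma aux_Arow_bound {fx fy fm Q K : ℝ} {qv : Fin 2 → ℝ} {p pbar : Fin 3 → ℝ}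
    (hfx : 0 ≤ fx) (hfy : 0 ≤ fy) (hfmx : fx ≤ fm) (hfmy : fy ≤ fm)
    (hQ : 0 ≤ Q) (hK : 0 ≤ K) (hq : ∀ j, |qv j| ≤ Q) (hp : ∀ m, |p m| ≤ K)
    (hpb : ∀ m, |pbar m| ≤ K) (j : Fin 2) (k : Fin 11) :
    |Arow fx fy qv p pbar j k| ≤ Q * (2 * K) + fm * K + fm := by
  fin_cases j
  · simpa [Arow] using aux_rowU_bound hfx hfmx hQ hK (hq 0) hp hpb k
  · simpa [Arow] using aux_rowV_bound hfy hfmy hQ hK (hq 1) hp hpb k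

lemma aux_term (fx fy σ : ℝ) (qov : Fin 2 → ℝ) (pv pbarv : Fin 3 → ℝ)
    (ev : Fin 2 → ℝ) (j : Fin 2) (k l : Fin 11) :
    Arow fx fy (qov + ev) pv pbarv j k * Arow fx fy (qov + ev) pv pbarv j l
      - Arow fx fy qov pv pbarv j k * Arow fx fy qov pv pbarv j l
      - σ ^ 2 * (Grow pv pbarv k * Grow pv pbarv l)
    = (Arow fx fy qov pv pbarv j k * Grow pv pbarv l
        + Arow fx fy qov pv pbarv j l * Grow pv pbarv k) * ev j
      + (Grow pv pbarv k * Grow pv pbarv l) * ((ev j) ^ 2 - σ ^ 2) := by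
  rw [aux_Arow_add, aux_Arow_add]; ring

/-! ### Probabilistic auxiliary lemmas -/

/-- generic one-term random variable `aa·e + cc·(e²−σ²)` -/
def Zfun {Ω : Type*} (aa cc σ : ℝ) (e : Ω → ℝ) : Ω → ℝ :=
  fun ω => aa * e ω + cc * (e ω ^ 2 - σ ^ 2)

/-- The summand random variables of the key identity. -/
def Ydef {Ω : Type*} (fx fy σ : ℝ) (qo : ℕ → Fin 2 → ℝ) (p : ℕ → Fin 3 → ℝ)
    (pbar : Fin 3 → ℝ) (ε : ℕ → Fin 2 → Ω → ℝ) (k l : Fin 11) (a : ℕ × Fin 2) : Ω → ℝ :=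
  Zfun (Arow fx fy (qo a.1) (p a.1) pbar a.2 k * Grow (p a.1) pbar l
      + Arow fx fy (qo a.1) (p a.1) pbar a.2 l * Grow (p a.1) pbar k)
    (Grow (p a.1) pbar k * Grow (p a.1) pbar l) σ (ε a.1 a.2)

lemma Zfun_props {Ω : Type*} [MeasurableSpace Ω] (μ : Measure Ω) [IsProbabilityMeasure μ]
    (e : Ω → ℝ) (he : Measurable e) (σ m4 aa cc CA CC : ℝ)
    (hint4 : Integrable (fun ω => e ω ^ 4) μ)
    (hmean : ∫ ω, e ω ∂μ = 0) (hvar : ∫ ω, e ω ^ 2 ∂μ = σ ^ 2)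
    (hm4 : ∫ ω, e ω ^ 4 ∂μ = m4)
    (haa : |aa| ≤ CA) (hcc : |cc| ≤ CC) :
    MemLp (Zfun aa cc σ e) 2 μ ∧ (∫ ω, Zfun aa cc σ e ω ∂μ) = 0 ∧
      variance (Zfun aa cc σ e) μ ≤ 2 * CA ^ 2 * σ ^ 2 + 2 * CC ^ 2 * (2 * m4 + 2 * σ ^ 2 ^ 2) := by
  have hsm : AEStronglyMeasurable e μ := he.aestronglyMeasurable
  have hint2 : Integrable (fun ω => e ω ^ 2) μ := by
    refine Integrable.mono' ((integrable_const (1:ℝ)).add hint4)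
      ((he.pow_const 2).aestronglyMeasurable) (Filter.Eventually.of_forall fun ω => ?_)
    have : ‖e ω ^ 2‖ = e ω ^ 2 := by
      rw [Real.norm_eq_abs, abs_of_nonneg (sq_nonneg _)]
    rw [this]; simp only [Pi.add_apply]; nlinarith [sq_nonneg (e ω ^ 2 - 1)]
  have hL2e : MemLp e 2 μ := (memLp_two_iff_integrable_sq hsm).2 hint2
  have hL2e2 : MemLp (fun ω => e ω ^ 2) 2 μ := by
    refine (memLp_two_iff_integrable_sq ((he.pow_const 2).aestronglyMeasurable)).2 ?_
    have h4 : (fun ω => (e ω ^ 2) ^ 2) = fun ω => e ω ^ 4 := by funext ω; ring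
    exact h4 ▸ hint4
  have hZ2 : MemLp (Zfun aa cc σ e) 2 μ := by
    exact (hL2e.const_mul aa).add ((hL2e2.sub (memLp_const (σ ^ 2))).const_mul cc)
  have hint_e : Integrable e μ := hL2e.integrable one_le_two
  have hint_sub : Integrable (fun ω => e ω ^ 2 - σ ^ 2) μ := by
    exact hint2.sub (integrable_const _)
  have hint_cc : Integrable (fun ω => cc * (e ω ^ 2 - σ ^ 2)) μ := by
    exact hint_sub.const_mul cc
  have hint_aa : Integrable (fun ω => aa * e ω) μ := by exact hint_e.const_mul aa
  have hmeanZ : (∫ ω, Zfun aa cc σ e ω ∂μ) = 0 := by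
    simp only [Zfun]
    rw [integral_add hint_aa hint_cc, integral_const_mul, integral_const_mul,
      integral_sub hint2 (integrable_const _), integral_const, hmean, hvar]
    simp
  refine ⟨hZ2, hmeanZ, ?_⟩
  have hZsq : Integrable (fun ω => Zfun aa cc σ e ω ^ 2) μ := hZ2.integrable_sq
  have i1 : Integrable (fun ω => 2 * CA ^ 2 * e ω ^ 2) μ := by exact hint2.const_mul _
  have i4 : Integrable (fun ω => 2 * e ω ^ 4) μ := by exact hint4.const_mul 2
  have i2 : Integrable (fun ω => 2 * e ω ^ 4 + 2 * σ ^ 2 ^ 2) μ := by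
    exact i4.add (integrable_const _)
  have i3 : Integrable (fun ω => 2 * CC ^ 2 * (2 * e ω ^ 4 + 2 * σ ^ 2 ^ 2)) μ := by
    exact i2.const_mul _
  have hrhs_int : Integrable
      (fun ω => 2 * CA ^ 2 * e ω ^ 2 + 2 * CC ^ 2 * (2 * e ω ^ 4 + 2 * σ ^ 2 ^ 2)) μ := by
    exact i1.add i3
  have hbound : ∫ ω, Zfun aa cc σ e ω ^ 2 ∂μ
      ≤ 2 * CA ^ 2 * σ ^ 2 + 2 * CC ^ 2 * (2 * m4 + 2 * σ ^ 2 ^ 2) := by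
    have hpt : ∀ ω, Zfun aa cc σ e ω ^ 2
        ≤ 2 * CA ^ 2 * e ω ^ 2 + 2 * CC ^ 2 * (2 * e ω ^ 4 + 2 * σ ^ 2 ^ 2) := by
      intro ω
      set x := e ω with hx
      have h1 : aa ^ 2 ≤ CA ^ 2 := by nlinarith [abs_nonneg aa, neg_abs_le aa, le_abs_self aa]
      have h2 : cc ^ 2 ≤ CC ^ 2 := by nlinarith [abs_nonneg cc, neg_abs_le cc, le_abs_self cc]
      have hy : (x ^ 2 - σ ^ 2) ^ 2 ≤ 2 * x ^ 4 + 2 * σ ^ 2 ^ 2 := by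
        have hexp : 2 * x ^ 4 + 2 * σ ^ 2 ^ 2 - (x ^ 2 - σ ^ 2) ^ 2 = (x ^ 2 + σ ^ 2) ^ 2 := by
          ring
        linarith [sq_nonneg (x ^ 2 + σ ^ 2)]
      have h3 : aa ^ 2 * x ^ 2 ≤ CA ^ 2 * x ^ 2 :=
        mul_le_mul_of_nonneg_right h1 (sq_nonneg x)
      have h4 : cc ^ 2 * (x ^ 2 - σ ^ 2) ^ 2 ≤ CC ^ 2 * (2 * x ^ 4 + 2 * σ ^ 2 ^ 2) :=
        mul_le_mul h2 hy (sq_nonneg _) (sq_nonneg CC)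
      have key : (aa * x + cc * (x ^ 2 - σ ^ 2)) ^ 2
          ≤ 2 * (aa ^ 2 * x ^ 2) + 2 * (cc ^ 2 * (x ^ 2 - σ ^ 2) ^ 2) := by
        nlinarith [sq_nonneg (aa * x - cc * (x ^ 2 - σ ^ 2))]
      show (aa * x + cc * (x ^ 2 - σ ^ 2)) ^ 2 ≤ _
      linarith
    calc ∫ ω, Zfun aa cc σ e ω ^ 2 ∂μ
        ≤ ∫ ω, (2 * CA ^ 2 * e ω ^ 2 + 2 * CC ^ 2 * (2 * e ω ^ 4 + 2 * σ ^ 2 ^ 2)) ∂μ :=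
          integral_mono hZsq hrhs_int hpt
      _ = 2 * CA ^ 2 * σ ^ 2 + 2 * CC ^ 2 * (2 * m4 + 2 * σ ^ 2 ^ 2) := by
          rw [integral_add i1 i3, integral_const_mul, integral_const_mul,
            integral_add i4 (integrable_const _), integral_const_mul,
            integral_const, hvar, hm4]
          simp
  calc variance (Zfun aa cc σ e) μ
      = ∫ ω, (Zfun aa cc σ e) ω ^ 2 ∂μ - (∫ ω, Zfun aa cc σ e ω ∂μ) ^ 2 := by
        rw [variance_eq_sub hZ2]; simp [Pi.pow_apply]
    _ ≤ 2 * CA ^ 2 * σ ^ 2 + 2 * CC ^ 2 * (2 * m4 + 2 * σ ^ 2 ^ 2) := by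
        rw [hmeanZ]; simpa using hbound

lemma cheb_sum {Ω : Type*} [MeasurableSpace Ω] (μ : Measure Ω) [IsProbabilityMeasure μ]
    {ι : Type*} (s : Finset ι) (X : ι → Ω → ℝ) (V c : ℝ) (hc : 0 < c)
    (hmem : ∀ a ∈ s, MemLp (X a) 2 μ)
    (hindep : Set.Pairwise ↑s fun a b => IndepFun (X a) (X b) μ)
    (hmean : ∀ a ∈ s, ∫ ω, X a ω ∂μ = 0)
    (hvar : ∀ a ∈ s, variance (X a) μ ≤ V) :
    μ {ω | c ≤ |∑ a ∈ s, X a ω|} ≤ ENNReal.ofReal ((s.card * V) / c ^ 2) := by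
  have hmemS : MemLp (∑ a ∈ s, X a) 2 μ := memLp_finset_sum' s hmem
  have hintS : ∀ a ∈ s, Integrable (X a) μ := fun a ha => (hmem a ha).integrable one_le_two
  have hmuS : ∫ ω, (∑ a ∈ s, X a) ω ∂μ = 0 := by
    simp only [Finset.sum_apply]
    rw [integral_finset_sum s hintS]
    exact Finset.sum_eq_zero hmean
  have hvarS : variance (∑ a ∈ s, X a) μ ≤ s.card * V := by
    rw [IndepFun.variance_sum hmem hindep]
    calc ∑ a ∈ s, variance (X a) μ ≤ ∑ _a ∈ s, V := Finset.sum_le_sum hvar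
      _ = s.card * V := by rw [Finset.sum_const, nsmul_eq_mul]
  have hcheb := meas_ge_le_variance_div_sq (μ := μ) hmemS hc
  rw [hmuS] at hcheb
  calc μ {ω | c ≤ |∑ a ∈ s, X a ω|}
      = μ {ω | c ≤ |(∑ a ∈ s, X a) ω - 0|} := by
        simp only [sub_zero, Finset.sum_apply]
    _ ≤ ENNReal.ofReal (variance (∑ a ∈ s, X a) μ / c ^ 2) := hcheb
    _ ≤ ENNReal.ofReal ((s.card * V) / c ^ 2) := by
        exact ENNReal.ofReal_le_ofReal (div_le_div_of_nonneg_right hvarS (by positivity))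
lemma aux_frob {M : Matrix (Fin 11) (Fin 11) ℝ} {η : ℝ} (hη : 0 < η)
    (h : ∀ k l : Fin 11, |M k l| ≤ η / 11) : frobNorm11 M ≤ η := by
  unfold frobNorm11
  have hsum : ∑ i, ∑ j, (M i j) ^ 2 ≤ η ^ 2 := by
    calc ∑ i, ∑ j, (M i j) ^ 2 ≤ ∑ _i : Fin 11, ∑ _j : Fin 11, (η / 11) ^ 2 := by
          refine Finset.sum_le_sum fun i _ => Finset.sum_le_sum fun j _ => ?_
          calc (M i j) ^ 2 = |M i j| ^ 2 := (sq_abs _).symm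
            _ ≤ (η / 11) ^ 2 := pow_le_pow_left₀ (abs_nonneg _) (h i j) 2
      _ = η ^ 2 := by
          simp only [Finset.sum_const, Finset.card_univ, Fintype.card_fin, nsmul_eq_mul]
          ring
  calc Real.sqrt (∑ i, ∑ j, (M i j) ^ 2) ≤ Real.sqrt (η ^ 2) := Real.sqrt_le_sqrt hsum
    _ = η := Real.sqrt_sq hη.le

lemma aux_union {Ω : Type*} [MeasurableSpace Ω] (μ : Measure Ω)
    (F : Ω → Matrix (Fin 11) (Fin 11) ℝ) (η : ℝ) (hη : 0 < η) (bd : ENNReal)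
    (hkl : ∀ k l : Fin 11, μ {ω | η / 11 < |F ω k l|} ≤ bd) :
    μ {ω | η < frobNorm11 (F ω)} ≤ 121 * bd := by
  have hsub : {ω | η < frobNorm11 (F ω)}
      ⊆ ⋃ kl : Fin 11 × Fin 11, {ω | η / 11 < |F ω kl.1 kl.2|} := by
    intro ω hω
    by_contra hcon
    simp only [Set.mem_iUnion, not_exists, Set.mem_setOf_eq, not_lt] at hcon
    rw [Set.mem_setOf_eq] at hω
    exact absurd hω (not_lt.mpr (aux_frob hη fun k l => hcon (k, l)))
  calc μ {ω | η < frobNorm11 (F ω)}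
      ≤ ∑' kl : Fin 11 × Fin 11, μ {ω | η / 11 < |F ω kl.1 kl.2|} :=
        le_trans (measure_mono hsub) (measure_iUnion_le _)
    _ = ∑ kl : Fin 11 × Fin 11, μ {ω | η / 11 < |F ω kl.1 kl.2|} := tsum_fintype _
    _ ≤ ∑ _kl : Fin 11 × Fin 11, bd := Finset.sum_le_sum fun kl _ => hkl kl.1 kl.2
    _ = 121 * bd := by
        rw [Finset.sum_const, Finset.card_univ]
        simp [nsmul_eq_mul]

theorem AtA_minus_BtB_bias_converges
    {Ω : Type*} [MeasurableSpace Ω] (μ : Measure Ω) [IsProbabilityMeasure μ]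
    (fx fy : ℝ) (hfx : 0 < fx) (hfy : 0 < fy)
    (R : Matrix (Fin 3) (Fin 3) ℝ) (hRorth : Rᵀ * R = 1) (hRdet : R.det = 1)
    (t : Fin 3 → ℝ)
    (p : ℕ → Fin 3 → ℝ) (K δ : ℝ) (hK : 0 < K) (hδ : 0 < δ)
    (hpK : ∀ i, ‖p i‖ ≤ K)
    (d : ℕ → ℝ) (hd : ∀ i, d i = (R.mulVec (p i) + t) 2) (hdδ : ∀ i, δ ≤ d i)
    (ε : ℕ → Fin 2 → Ω → ℝ) (σ : ℝ)
    (hmeas : ∀ i j, Measurable (ε i j))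
    (hindep : iIndepFun (fun ij : ℕ × Fin 2 => ε ij.1 ij.2) μ)
    (hident : ∀ i j, IdentDistrib (ε i j) (ε 0 0) μ μ)
    (hmom4 : ∀ i j, Integrable (fun ω => (ε i j ω) ^ 4) μ)
    (hmean : ∀ i j, ∫ ω, ε i j ω ∂μ = 0)
    (hvar : ∀ i j, ∫ ω, (ε i j ω) ^ 2 ∂μ = σ ^ 2)
    (qo : ℕ → Fin 2 → ℝ)
    (hqo : ∀ i, qo i = (d i)⁻¹ • (Wmat fx fy * Emat).mulVec (R.mulVec (p i) + t))
    (q : ℕ → Ω → Fin 2 → ℝ)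
    (hq : ∀ i ω, q i ω = qo i + fun j => ε i j ω)
    (pbar : ℕ → Fin 3 → ℝ)
    (hpbar : ∀ n : ℕ, pbar n = (n : ℝ)⁻¹ • ∑ i ∈ Finset.range n, p i)
    (A : (n : ℕ) → Ω → Matrix (Fin n × Fin 2) (Fin 11) ℝ)
    (hA : ∀ (n : ℕ) (ω : Ω) (ij : Fin n × Fin 2),
      A n ω ij = Arow fx fy (q ij.1 ω) (p ij.1) (pbar n) ij.2)
    (B : (n : ℕ) → Matrix (Fin n × Fin 2) (Fin 11) ℝ)
    (hB : ∀ (n : ℕ) (ij : Fin n × Fin 2),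
      B n ij = Arow fx fy (qo ij.1) (p ij.1) (pbar n) ij.2)
    (G : (n : ℕ) → Matrix (Fin n × Fin 2) (Fin 11) ℝ)
    (hG : ∀ (n : ℕ) (ij : Fin n × Fin 2), G n ij = Grow (p ij.1) (pbar n)) :
    ∀ η : ℝ, 0 < η →
      Filter.Tendsto
        (fun n : ℕ =>
          (μ {ω | η < frobNorm11
            ((n : ℝ)⁻¹ • ((A n ω)ᵀ * A n ω - (B n)ᵀ * B n)
              - σ ^ 2 • ((n : ℝ)⁻¹ • ((G n)ᵀ * G n)))}).toReal)
        Filter.atTop (nhds 0) := by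
  intro η hη
  -- constants
  set η' : ℝ := η / 11 with hη'def
  have hη' : 0 < η' := by positivity
  set fm : ℝ := max fx fy with hfmdef
  have hfmx : fx ≤ fm := le_max_left _ _
  have hfmy : fy ≤ fm := le_max_right _ _
  have hfm0 : 0 ≤ fm := le_trans hfx.le hfmx
  set T : ℝ := ‖t‖ with hTdef
  have hT0 : 0 ≤ T := norm_nonneg _
  set Q : ℝ := δ⁻¹ * (fm * (3 * K + T)) with hQdef
  have hQ0 : 0 ≤ Q := by positivity
  set CB : ℝ := Q * (2 * K) + fm * K + fm with hCBdef
  have hCB0 : 0 ≤ CB := by positivity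
  set CA : ℝ := CB * (2 * K) + CB * (2 * K) with hCAdef
  have hCA0 : 0 ≤ CA := by positivity
  set CC : ℝ := (2 * K) * (2 * K) with hCCdef
  have hCC0 : 0 ≤ CC := by positivity
  set m4 : ℝ := ∫ ω, (ε 0 0 ω) ^ 4 ∂μ with hm4def
  have hm4nn : 0 ≤ m4 := integral_nonneg fun ω => by positivity
  set V : ℝ := 2 * CA ^ 2 * σ ^ 2 + 2 * CC ^ 2 * (2 * m4 + 2 * σ ^ 2 ^ 2) with hVdef
  have hV0 : 0 ≤ V := by
    have h1 : (0:ℝ) ≤ 2 * m4 + 2 * σ ^ 2 ^ 2 := by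
      have hs4 : (0:ℝ) ≤ σ ^ 2 ^ 2 := by
        calc (0:ℝ) ≤ (σ ^ 2) ^ 2 := sq_nonneg _
          _ = σ ^ 2 ^ 2 := by ring
      linarith
    have h2 : (0:ℝ) ≤ 2 * CC ^ 2 * (2 * m4 + 2 * σ ^ 2 ^ 2) :=
      mul_nonneg (by positivity) h1
    have h3 : (0:ℝ) ≤ 2 * CA ^ 2 * σ ^ 2 := by positivity
    rw [hVdef]; linarith
  -- fourth moments are all equal
  have hm4eq : ∀ i j, ∫ ω, (ε i j ω) ^ 4 ∂μ = m4 := by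
    intro i j
    exact ((hident i j).comp (measurable_id.pow_const 4)).integral_eq
  -- deterministic bounds
  have hpabs : ∀ i m, |p i m| ≤ K := by
    intro i m
    have := norm_le_pi_norm (p i) m
    rw [Real.norm_eq_abs] at this
    exact le_trans this (hpK i)
  have hpbabs : ∀ n m, |pbar n m| ≤ K := by
    intro n m
    rw [hpbar n]
    rcases Nat.eq_zero_or_pos n with hn | hn
    · subst hn; simpa using hK.le
    · have hn' : (0:ℝ) < n := by exact_mod_cast hn
      simp only [Pi.smul_apply, Finset.sum_apply, smul_eq_mul]
      rw [abs_mul, abs_inv, Nat.abs_cast]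
      have hsum : |∑ i ∈ Finset.range n, p i m| ≤ (n : ℝ) * K := by
        calc |∑ i ∈ Finset.range n, p i m| ≤ ∑ i ∈ Finset.range n, |p i m| :=
              Finset.abs_sum_le_sum_abs _ _
          _ ≤ ∑ _i ∈ Finset.range n, K := Finset.sum_le_sum fun i _ => hpabs i m
          _ = (n : ℝ) * K := by rw [Finset.sum_const, Finset.card_range, nsmul_eq_mul]
      calc (n:ℝ)⁻¹ * |∑ i ∈ Finset.range n, p i m| ≤ (n:ℝ)⁻¹ * ((n:ℝ) * K) := by
            exact mul_le_mul_of_nonneg_left hsum (by positivity)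
        _ = K := by field_simp
  have hRabs : ∀ j m, |R j m| ≤ 1 := by
    intro j m
    have h := congrFun (congrFun hRorth m) m
    simp only [Matrix.mul_apply, Matrix.transpose_apply, Matrix.one_apply_eq] at h
    have hle : R j m * R j m ≤ 1 := by
      rw [← h]
      exact Finset.single_le_sum (f := fun j' => R j' m * R j' m)
        (fun a _ => mul_self_nonneg _) (Finset.mem_univ j)
    exact abs_le_one_iff_mul_self_le_one.mpr hle
  have hRpt : ∀ i j, |(R.mulVec (p i) + t) j| ≤ 3 * K + T := by
    intro i j
    have htj : |t j| ≤ T := by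
      have := norm_le_pi_norm t j
      rwa [Real.norm_eq_abs] at this
    have hRp : |(R.mulVec (p i)) j| ≤ 3 * K := by
      rw [Matrix.mulVec, dotProduct]
      calc |∑ m : Fin 3, R j m * p i m| ≤ ∑ m : Fin 3, |R j m * p i m| :=
            Finset.abs_sum_le_sum_abs _ _
        _ ≤ ∑ _m : Fin 3, K := by
            refine Finset.sum_le_sum fun m _ => ?_
            rw [abs_mul]
            calc |R j m| * |p i m| ≤ 1 * K :=
                  mul_le_mul (hRabs j m) (hpabs i m) (abs_nonneg _) zero_le_one
              _ = K := one_mul K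
        _ = 3 * K := by simp [Finset.sum_const]
    calc |(R.mulVec (p i) + t) j| = |(R.mulVec (p i)) j + t j| := rfl
      _ ≤ |(R.mulVec (p i)) j| + |t j| := abs_add_le _ _
      _ ≤ 3 * K + T := add_le_add hRp htj
  have hdpos : ∀ i, 0 < d i := fun i => lt_of_lt_of_le hδ (hdδ i)
  have hWE : ∀ (v : Fin 3 → ℝ) (j : Fin 2),
      (Wmat fx fy * Emat).mulVec v j = if j = 0 then fx * v 0 else fy * v 1 := by
    intro v j
    fin_cases j <;>
      simp [Wmat, Emat, Matrix.mulVec, Matrix.mul_apply, dotProduct,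
        Fin.sum_univ_three, Fin.sum_univ_two, Matrix.diagonal]
  have hqoabs : ∀ i j, |qo i j| ≤ Q := by
    intro i j
    rw [hqo i]
    simp only [Pi.smul_apply, smul_eq_mul]
    rw [hWE]
    have hdinv : (d i)⁻¹ ≤ δ⁻¹ := by
      exact inv_anti₀ hδ (hdδ i)
    have hdinv0 : 0 ≤ (d i)⁻¹ := inv_nonneg.mpr (hdpos i).le
    rw [abs_mul, abs_of_nonneg hdinv0]
    rcases eq_or_ne j 0 with hj | hj
    · rw [if_pos hj, abs_mul, abs_of_nonneg hfx.le]
      calc (d i)⁻¹ * (fx * |(R.mulVec (p i) + t) 0|) ≤ δ⁻¹ * (fm * (3 * K + T)) := by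
            refine mul_le_mul hdinv ?_ (by positivity) (by positivity)
            exact mul_le_mul hfmx (hRpt i 0) (abs_nonneg _) hfm0
        _ = Q := rfl
    · rw [if_neg hj, abs_mul, abs_of_nonneg hfy.le]
      calc (d i)⁻¹ * (fy * |(R.mulVec (p i) + t) 1|) ≤ δ⁻¹ * (fm * (3 * K + T)) := by
            refine mul_le_mul hdinv ?_ (by positivity) (by positivity)
            exact mul_le_mul hfmy (hRpt i 1) (abs_nonneg _) hfm0
        _ = Q := rfl
  have hBabs : ∀ (n i : ℕ) (j : Fin 2) (k : Fin 11),
      |Arow fx fy (qo i) (p i) (pbar n) j k| ≤ CB := fun n i j k =>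
    aux_Arow_bound hfx.le hfy.le hfmx hfmy hQ0 hK.le (hqoabs i) (hpabs i) (hpbabs n) j k
  have hgabs : ∀ (n i : ℕ) (k : Fin 11), |Grow (p i) (pbar n) k| ≤ 2 * K := fun n i k =>
    aux_Grow_bound (hpabs i) (hpbabs n) k
  -- properties of the Y random variables
  have hYprops : ∀ (n : ℕ) (k l : Fin 11) (a : ℕ × Fin 2),
      MemLp (Ydef fx fy σ qo p (pbar n) ε k l a) 2 μ ∧
      (∫ ω, Ydef fx fy σ qo p (pbar n) ε k l a ω ∂μ) = 0 ∧
      variance (Ydef fx fy σ qo p (pbar n) ε k l a) μ ≤ V := by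
    intro n k l a
    have haa : |Arow fx fy (qo a.1) (p a.1) (pbar n) a.2 k * Grow (p a.1) (pbar n) l
        + Arow fx fy (qo a.1) (p a.1) (pbar n) a.2 l * Grow (p a.1) (pbar n) k| ≤ CA := by
      calc |Arow fx fy (qo a.1) (p a.1) (pbar n) a.2 k * Grow (p a.1) (pbar n) l
          + Arow fx fy (qo a.1) (p a.1) (pbar n) a.2 l * Grow (p a.1) (pbar n) k|
          ≤ |Arow fx fy (qo a.1) (p a.1) (pbar n) a.2 k| * |Grow (p a.1) (pbar n) l|
            + |Arow fx fy (qo a.1) (p a.1) (pbar n) a.2 l| * |Grow (p a.1) (pbar n) k| := by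
            rw [← abs_mul, ← abs_mul]; exact abs_add_le _ _
        _ ≤ CB * (2 * K) + CB * (2 * K) := by
            refine add_le_add ?_ ?_ <;>
              exact mul_le_mul (hBabs _ _ _ _) (hgabs _ _ _) (abs_nonneg _) hCB0
        _ = CA := rfl
    have hcc : |Grow (p a.1) (pbar n) k * Grow (p a.1) (pbar n) l| ≤ CC := by
      rw [abs_mul]
      exact mul_le_mul (hgabs _ _ _) (hgabs _ _ _) (abs_nonneg _) (by positivity)
    exact Zfun_props μ (ε a.1 a.2) (hmeas a.1 a.2) σ m4 _ _ CA CC (hmom4 a.1 a.2)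
      (hmean a.1 a.2) (hvar a.1 a.2) (hm4eq a.1 a.2) haa hcc
  -- key identity
  have hMent : ∀ (n : ℕ) (ω : Ω) (k l : Fin 11),
      ((n : ℝ)⁻¹ • ((A n ω)ᵀ * A n ω - (B n)ᵀ * B n)
        - σ ^ 2 • ((n : ℝ)⁻¹ • ((G n)ᵀ * G n))) k l
      = (n : ℝ)⁻¹ * ∑ a ∈ Finset.range n ×ˢ (Finset.univ : Finset (Fin 2)),
          Ydef fx fy σ qo p (pbar n) ε k l a ω := by
    intro n ω k l
    have expand : ∀ (M : Matrix (Fin n × Fin 2) (Fin 11) ℝ),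
        (Mᵀ * M) k l = ∑ i : Fin n, ∑ j : Fin 2, M (i, j) k * M (i, j) l := by
      intro M
      simp only [Matrix.mul_apply, Matrix.transpose_apply, Fintype.sum_prod_type]
    have key : ∀ (i : Fin n) (j : Fin 2),
        A n ω (i, j) k * A n ω (i, j) l - B n (i, j) k * B n (i, j) l
          - σ ^ 2 * (G n (i, j) k * G n (i, j) l)
        = Ydef fx fy σ qo p (pbar n) ε k l ((i : ℕ), j) ω := by
      intro i j
      rw [hA, hB, hG, hq]
      simpa [Ydef, Zfun] using
        aux_term fx fy σ (qo (i : ℕ)) (p (i : ℕ)) (pbar n) (fun j' => ε (i : ℕ) j' ω) j k l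
    have hsums : (∑ i : Fin n, ∑ j : Fin 2, A n ω (i, j) k * A n ω (i, j) l)
        - (∑ i : Fin n, ∑ j : Fin 2, B n (i, j) k * B n (i, j) l)
        - σ ^ 2 * (∑ i : Fin n, ∑ j : Fin 2, G n (i, j) k * G n (i, j) l)
        = ∑ i : Fin n, ∑ j : Fin 2, Ydef fx fy σ qo p (pbar n) ε k l ((i : ℕ), j) ω := by
      simp only [Finset.mul_sum, ← Finset.sum_sub_distrib]
      exact Finset.sum_congr rfl fun i _ => Finset.sum_congr rfl fun j _ => key i j
    rw [Finset.sum_product,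
      ← Fin.sum_univ_eq_sum_range
        (fun i => ∑ j : Fin 2, Ydef fx fy σ qo p (pbar n) ε k l (i, j) ω) n]
    simp only [Matrix.sub_apply, Matrix.smul_apply, smul_eq_mul, expand]
    rw [← hsums]; ring
  -- per-entry Chebyshev estimate
  have hentry : ∀ (n : ℕ) (k l : Fin 11),
      μ {ω | η' < |((n : ℝ)⁻¹ • ((A n ω)ᵀ * A n ω - (B n)ᵀ * B n)
        - σ ^ 2 • ((n : ℝ)⁻¹ • ((G n)ᵀ * G n))) k l|}
      ≤ ENNReal.ofReal ((2 * V / η' ^ 2) / n) := by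
    intro n k l
    simp only [hMent]
    rcases Nat.eq_zero_or_pos n with hn | hn
    · subst hn
      have hset : {ω : Ω | η' < |((0:ℕ) : ℝ)⁻¹ *
          ∑ a ∈ Finset.range 0 ×ˢ (Finset.univ : Finset (Fin 2)),
            Ydef fx fy σ qo p (pbar 0) ε k l a ω|} = ∅ := by
        ext ω
        simp only [Set.mem_setOf_eq, Set.mem_empty_iff_false, iff_false, not_lt,
          Finset.range_zero, Finset.empty_product, Finset.sum_empty, mul_zero, abs_zero]
        exact hη'.le
      rw [hset]; simp
    · have hn' : (0:ℝ) < n := by exact_mod_cast hn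
      set s : Finset (ℕ × Fin 2) := Finset.range n ×ˢ Finset.univ with hsdef
      have hpw : Set.Pairwise ↑s (fun a b =>
          IndepFun (Ydef fx fy σ qo p (pbar n) ε k l a)
            (Ydef fx fy σ qo p (pbar n) ε k l b) μ) := by
        intro a _ b _ hab
        have hφ : ∀ c : ℕ × Fin 2, Measurable (fun x : ℝ =>
            (Arow fx fy (qo c.1) (p c.1) (pbar n) c.2 k * Grow (p c.1) (pbar n) l
              + Arow fx fy (qo c.1) (p c.1) (pbar n) c.2 l * Grow (p c.1) (pbar n) k) * x
            + (Grow (p c.1) (pbar n) k * Grow (p c.1) (pbar n) l) * (x ^ 2 - σ ^ 2)) := by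
          intro c
          exact (measurable_id.const_mul _).add
            (((measurable_id.pow_const 2).sub measurable_const).const_mul _)
        have base : IndepFun (ε a.1 a.2) (ε b.1 b.2) μ := hindep.indepFun hab
        exact base.comp (hφ a) (hφ b)
      have hcheb := cheb_sum μ s (fun a => Ydef fx fy σ qo p (pbar n) ε k l a) V ((n:ℝ) * η')
        (by positivity) (fun a _ => (hYprops n k l a).1) hpw
        (fun a _ => (hYprops n k l a).2.1) (fun a _ => (hYprops n k l a).2.2)
      have hsub : {ω | η' < |(n:ℝ)⁻¹ * ∑ a ∈ s, Ydef fx fy σ qo p (pbar n) ε k l a ω|}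
          ⊆ {ω | (n:ℝ) * η' ≤ |∑ a ∈ s, Ydef fx fy σ qo p (pbar n) ε k l a ω|} := by
        intro ω hω
        simp only [Set.mem_setOf_eq] at hω ⊢
        rw [abs_mul, abs_inv, Nat.abs_cast] at hω
        have h2 := mul_lt_mul_of_pos_left hω hn'
        rw [← mul_assoc, mul_inv_cancel₀ (ne_of_gt hn'), one_mul] at h2
        exact h2.le
      refine le_trans (measure_mono hsub) (le_trans hcheb (ENNReal.ofReal_le_ofReal ?_))
      have hcard : (s.card : ℝ) = 2 * n := by
        rw [hsdef]
        simp [Finset.card_product]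
        ring
      rw [hcard, mul_pow]
      have heq : 2 * (n:ℝ) * V / ((n:ℝ)^2 * η'^2) = 2 * V / η'^2 / n := by
        field_simp
      exact le_of_eq heq
  -- union bound and conclusion
  have hfinal : ∀ n : ℕ,
      (μ {ω | η < frobNorm11 ((n:ℝ)⁻¹ • ((A n ω)ᵀ * A n ω - (B n)ᵀ * B n)
        - σ ^ 2 • ((n:ℝ)⁻¹ • ((G n)ᵀ * G n)))}).toReal
      ≤ 121 * ((2 * V / η' ^ 2) / n) := by
    intro n
    have hub := aux_union μ
      (fun ω => (n:ℝ)⁻¹ • ((A n ω)ᵀ * A n ω - (B n)ᵀ * B n)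
        - σ ^ 2 • ((n:ℝ)⁻¹ • ((G n)ᵀ * G n))) η hη
      (ENNReal.ofReal ((2 * V / η' ^ 2) / n))
      (fun k l => hentry n k l)
    have hnn : (0:ℝ) ≤ 121 * ((2 * V / η' ^ 2) / n) :=
      mul_nonneg (by norm_num) (div_nonneg (by positivity) (Nat.cast_nonneg n))
    refine ENNReal.toReal_le_of_le_ofReal hnn ?_
    refine le_trans hub ?_
    rw [ENNReal.ofReal_mul (by norm_num : (0:ℝ) ≤ 121)]
    norm_num
  have htend : Filter.Tendsto (fun n : ℕ => 121 * ((2 * V / η' ^ 2) / (n:ℝ)))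
      Filter.atTop (nhds 0) := by
    have h := tendsto_const_div_atTop_nhds_zero_nat (121 * (2 * V / η' ^ 2))
    refine h.congr fun n => ?_
    rw [mul_div_assoc]
  exact squeeze_zero (fun n => ENNReal.toReal_nonneg) hfinal htend
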